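/- Let M : Y ⇉ X with Y a normed space, X a reflexive Banach space, gph M nonempty and convex, and let ȳ ∈ dom M be such that M(ȳ) is closed. Then Lipusc M(ȳ) = sup_{x ∈ M(ȳ)} clm M(ȳ, x). -/

import Mathlib

open Metric ENNReal

/-- Lipschitz upper semicontinuity modulus of a set-valued mapping `M` at `ȳ ∈ dom M`:
the infimum (in `ℝ≥0∞`, so `inf ∅ = ∞`) of constants `κ ≥ 0` such that for some
neighborhood `V` of `ȳ`, `dist(x, M(ȳ)) ≤ κ dist(y, ȳ)` for all `y ∈ V`, `x ∈ M(y)`. -/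
noncomputable def lipusc {Y X : Type*} [MetricSpace Y] [MetricSpace X]
    (M : Y → Set X) (ybar : Y) : ℝ≥0∞ :=
  sInf (ENNReal.ofReal '' {κ : ℝ | 0 ≤ κ ∧ ∃ V ∈ nhds ybar,
    ∀ y ∈ V, ∀ x ∈ M y, infDist x (M ybar) ≤ κ * dist y ybar})

/-- Calmness modulus of `M` at `(ȳ, x̄) ∈ gph M`. -/
noncomputable def clmod {Y X : Type*} [MetricSpace Y] [MetricSpace X]
    (M : Y → Set X) (ybar : Y) (xbar : X) : ℝ≥0∞ :=
  sInf (ENNReal.ofReal '' {κ : ℝ | 0 ≤ κ ∧ ∃ V ∈ nhds ybar, ∃ U ∈ nhds xbar,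
    ∀ y ∈ V, ∀ x ∈ M y ∩ U, infDist x (M ybar) ≤ κ * dist y ybar})


private lemma le_infDist_aux {X : Type*} [MetricSpace X] {C : Set X} (hne : C.Nonempty)
    {x : X} {b : ℝ} (h : ∀ q ∈ C, b ≤ dist x q) : b ≤ infDist x C :=
  le_of_not_gt fun hlt => by
    obtain ⟨q, hq, hd⟩ := (infDist_lt_iff hne).1 hlt
    exact absurd (h q hq) (not_le.2 hd)

open NormedSpace in
lemma exists_nearest {X : Type*} [NormedAddCommGroup X] [NormedSpace ℝ X]
    (hrefl : Function.Surjective ⇑(NormedSpace.inclusionInDoubleDual ℝ X))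
    {C : Set X} (hconv : Convex ℝ C) (hcl : IsClosed C) (hne : C.Nonempty) (x : X) :
    ∃ p ∈ C, dist x p ≤ infDist x C := by
  set d := infDist x C with hd
  have hd0 : 0 ≤ d := infDist_nonneg
  set S : ℕ → Set X := fun n => C ∩ closedBall x (d + 1 / (n + 1)) with hS
  have hSne : ∀ n : ℕ, (S n).Nonempty := by
    intro n
    have hpos : (0:ℝ) < 1 / (n + 1) := by positivity
    obtain ⟨q, hqC, hq⟩ := (infDist_lt_iff hne).1 (by linarith : infDist x C < d + 1 / (n + 1))
    exact ⟨q, hqC, by rw [mem_closedBall, dist_comm]; exact hq.le⟩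
  have hSanti : ∀ m n : ℕ, m ≤ n → S n ⊆ S m := by
    intro m n hmn z hz
    refine ⟨hz.1, ?_⟩
    have h1 : (1:ℝ) / (n + 1) ≤ 1 / (m + 1) := by
      apply one_div_le_one_div_of_le (by positivity)
      exact_mod_cast by omega
    exact closedBall_subset_closedBall (by linarith) hz.2
  -- embed into the weak-* bidual
  set j : X → WeakDual ℝ (StrongDual ℝ X) :=
    fun z => StrongDual.toWeakDual (inclusionInDoubleDual ℝ X z) with hj
  set K : ℕ → Set (WeakDual ℝ (StrongDual ℝ X)) := fun n => closure (j '' S n) with hK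
  set B : Set (WeakDual ℝ (StrongDual ℝ X)) :=
    WeakDual.toStrongDual ⁻¹' closedBall (0 : StrongDual ℝ (StrongDual ℝ X)) (‖x‖ + d + 1) with hB
  have hball : IsCompact B := WeakDual.isCompact_closedBall (𝕜 := ℝ) (E := StrongDual ℝ X) 0 _
  have hsub : ∀ n, K n ⊆ B := by
    intro n
    apply closure_minimal _ hball.isClosed
    rintro _ ⟨z, hz, rfl⟩
    have hzx : ‖z - x‖ ≤ d + 1 / (n + 1) := by
      have := hz.2; rwa [mem_closedBall, dist_eq_norm] at this
    have h1 : (1:ℝ) / (n + 1) ≤ 1 := by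
      rw [div_le_one (by positivity)]; linarith [Nat.cast_nonneg (α := ℝ) n]
    have hznorm : ‖z‖ ≤ ‖x‖ + d + 1 := by
      calc ‖z‖ ≤ ‖x‖ + ‖z - x‖ := by
            simpa using norm_add_le x (z - x)
        _ ≤ ‖x‖ + d + 1 := by linarith
    simp only [hB, Set.mem_preimage, mem_closedBall, dist_zero_right]
    calc dist (WeakDual.toStrongDual (j z)) 0 = ‖WeakDual.toStrongDual (j z)‖ :=
        dist_zero_right (E := StrongDual ℝ (StrongDual ℝ X)) _
      _ = ‖(inclusionInDoubleDualLi ℝ (E := X)) z‖ := rfl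
      _ = ‖z‖ := (inclusionInDoubleDualLi ℝ (E := X)).norm_map z
      _ ≤ ‖x‖ + d + 1 := hznorm
  have hKcl : ∀ n, IsClosed (K n) := fun n => isClosed_closure
  have hKcpt : ∀ n, IsCompact (K n) := fun n => hball.of_isClosed_subset (hKcl n) (hsub n)
  have hKne : ∀ n, (K n).Nonempty := fun n => ((hSne n).image j).closure
  have hKanti : Antitone K := by
    intro m n hmn
    exact closure_mono (Set.image_mono (hSanti m n hmn))
  obtain ⟨Φ, hΦ⟩ := IsCompact.nonempty_iInter_of_directed_nonempty_isCompact_isClosed K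
    hKanti.directed_ge hKne hKcpt hKcl
  obtain ⟨p, hp⟩ := hrefl (WeakDual.toStrongDual Φ)
  have hΦmem : ∀ n, Φ ∈ K n := fun n => Set.mem_iInter.1 hΦ n
  have hkey : ∀ (n : ℕ) (ξ : StrongDual ℝ X) (c : ℝ), (∀ z ∈ S n, ξ z ≤ c) → ξ p ≤ c := by
    intro n ξ c hc
    have hcl' : IsClosed {ψ : WeakDual ℝ (StrongDual ℝ X) | ψ ξ ≤ c} :=
      isClosed_Iic.preimage (WeakDual.eval_continuous ξ)
    have hsub' : K n ⊆ {ψ : WeakDual ℝ (StrongDual ℝ X) | ψ ξ ≤ c} := by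
      apply closure_minimal _ hcl'
      rintro _ ⟨z, hz, rfl⟩
      exact hc z hz
    have hΦξ : Φ ξ ≤ c := hsub' (hΦmem n)
    have : ξ p = Φ ξ := by
      have : inclusionInDoubleDual ℝ X p ξ = WeakDual.toStrongDual Φ ξ := by rw [hp]
      simpa [NormedSpace.dual_def] using this
    linarith [this ▸ hΦξ]
  have hpC : p ∈ C := by
    by_contra hpC
    obtain ⟨f, u, hfC, hfp⟩ := geometric_hahn_banach_closed_point hconv hcl hpC
    exact absurd (hkey 0 f u fun z hz => (hfC z hz.1).le) (not_le.2 hfp)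
  refine ⟨p, hpC, ?_⟩
  have hbound : ∀ n : ℕ, ‖p - x‖ ≤ d + 1 / (n + 1) := by
    intro n
    rcases eq_or_ne p x with rfl | hne0
    · simpa using add_nonneg hd0 (by positivity : (0:ℝ) ≤ 1 / (n+1))
    · obtain ⟨g, hg1, hgx⟩ := exists_dual_vector ℝ (p - x) (norm_ne_zero_iff.2 (sub_ne_zero.2 hne0))
      have hgp : g p ≤ g x + (d + 1 / (n + 1)) := by
        apply hkey n g
        intro z hz
        have hzx : ‖z - x‖ ≤ d + 1 / (n + 1) := by
          have := hz.2; rwa [mem_closedBall, dist_eq_norm] at this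
        have : g z - g x = g (z - x) := by rw [map_sub]
        have hb : g (z - x) ≤ ‖z - x‖ := by
          calc g (z - x) ≤ ‖g (z - x)‖ := le_abs_self _
            _ ≤ ‖g‖ * ‖z - x‖ := g.le_opNorm _
            _ = ‖z - x‖ := by rw [hg1, one_mul]
        linarith
      have : ‖p - x‖ = g p - g x := by
        have : g (p - x) = ‖p - x‖ := by simpa using hgx
        rw [← this, map_sub]
      linarith
  have : ‖p - x‖ ≤ d := by
    refine le_of_forall_pos_le_add fun ε hε => ?_
    obtain ⟨n, hn⟩ := exists_nat_one_div_lt hε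
    calc ‖p - x‖ ≤ d + 1 / (n + 1) := hbound n
      _ ≤ d + ε := by
        have : (1:ℝ) / (n + 1) ≤ ε := by exact_mod_cast hn.le
        linarith
  rw [dist_eq_norm, norm_sub_rev]
  exact this

/-- For `M : Y ⇉ X` with `Y` a real normed space and `X` a reflexive real Banach space
(reflexivity: the canonical inclusion into the bidual is surjective), if `gph M` is
nonempty and convex and `M(ȳ)` is closed for some `ȳ ∈ dom M`, then
`Lipusc M(ȳ) = sup_{x ∈ M(ȳ)} clm M(ȳ, x)`. -/
theorem stmt6 {Y X : Type*} [NormedAddCommGroup Y] [NormedSpace ℝ Y]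
    [NormedAddCommGroup X] [NormedSpace ℝ X] [CompleteSpace X]
    (hrefl : Function.Surjective ⇑(NormedSpace.inclusionInDoubleDual ℝ X))
    (M : Y → Set X)
    (hgph : Convex ℝ {p : Y × X | p.2 ∈ M p.1})
    (hne : {p : Y × X | p.2 ∈ M p.1}.Nonempty)
    (ybar : Y) (hdom : (M ybar).Nonempty) (hclosed : IsClosed (M ybar)) :
    lipusc M ybar = ⨆ x ∈ M ybar, clmod M ybar x := by
  have hCconv : Convex ℝ (M ybar) := by
    intro a ha b hb t u ht hu htu
    have := hgph (x := (ybar, a)) ha (y := (ybar, b)) hb ht hu htu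
    simpa [Prod.smul_mk, Prod.mk_add_mk, ← add_smul, htu] using this
  refine le_antisymm ?_ ?_
  · -- hard direction: lipusc ≤ sup
    by_contra hcon
    push_neg at hcon
    obtain ⟨r, hRr, hrlip⟩ := exists_between hcon
    set κ : ℝ := r.toReal with hκ
    have hrne : r ≠ ⊤ := hrlip.ne_top
    have hofr : ENNReal.ofReal κ = r := ENNReal.ofReal_toReal hrne
    have hκ0 : 0 ≤ κ := ENNReal.toReal_nonneg
    -- κ is not admissible for lipusc
    have hκnot : ¬ ∃ V ∈ nhds ybar, ∀ y ∈ V, ∀ x ∈ M y,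
        infDist x (M ybar) ≤ κ * dist y ybar := by
      intro hadm
      have : lipusc M ybar ≤ ENNReal.ofReal κ :=
        sInf_le (Set.mem_image_of_mem _ ⟨hκ0, hadm⟩)
      rw [hofr] at this
      exact absurd hrlip (not_lt.2 this)
    push_neg at hκnot
    obtain ⟨y, -, x, hxMy, hviol⟩ := hκnot Set.univ Filter.univ_mem
    set C := M ybar with hC
    set d := infDist x C with hd
    set τ := dist y ybar with hτdef
    have hτ0 : 0 ≤ τ := dist_nonneg
    have hκτ : κ * τ < d := hviol
    have hτpos : 0 < τ := by
      rcases eq_or_ne y ybar with rfl | hne'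
      · exfalso
        have hz : d = 0 := infDist_zero_of_mem hxMy
        nlinarith [mul_nonneg hκ0 hτ0]
      · exact dist_pos.2 hne'
    have hdpos : 0 < d := lt_of_le_of_lt (mul_nonneg hκ0 hτ0) hκτ
    obtain ⟨p, hpC, hpd⟩ := exists_nearest hrefl hCconv hclosed hdom x
    -- clmod at p is at least d/τ
    have hclm : ENNReal.ofReal (d / τ) ≤ clmod M ybar p := by
      apply le_sInf
      rintro _ ⟨κ'', ⟨hκ''0, V, hV, U, hU, H⟩, rfl⟩
      apply ENNReal.ofReal_le_ofReal
      rw [div_le_iff₀ hτpos]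
      -- choose a small parameter s along the segment
      set u : ℕ → ℝ := fun k => 1 / (k + 1) with hu
      have htend : Filter.Tendsto u Filter.atTop (nhds 0) :=
        tendsto_one_div_add_atTop_nhds_zero_nat
      have hY : Filter.Tendsto (fun k => ybar + u k • (y - ybar)) Filter.atTop (nhds ybar) := by
        have h1 := Filter.Tendsto.const_add ybar ((htend.smul_const (y - ybar)))
        simpa using h1
      have hX : Filter.Tendsto (fun k => p + u k • (x - p)) Filter.atTop (nhds p) := by
        have h1 := Filter.Tendsto.const_add p ((htend.smul_const (x - p)))
        simpa using h1
      have hev : ∀ᶠ k in Filter.atTop,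
          (ybar + u k • (y - ybar)) ∈ V ∧ (p + u k • (x - p)) ∈ U :=
        (hY.eventually hV).and (hX.eventually hU)
      obtain ⟨k, hkV, hkU⟩ := hev.exists
      set s : ℝ := u k with hs
      have hs0 : 0 < s := by positivity
      have hs1 : s ≤ 1 := by
        rw [hs, hu]
        rw [div_le_one (by positivity)]
        linarith [Nat.cast_nonneg (α := ℝ) k]
      -- graph membership of the segment point
      have hseg := hgph (x := (ybar, p)) hpC (y := (y, x)) hxMy
        (by linarith : (0:ℝ) ≤ 1 - s) hs0.le (by ring)
      have hYid : ybar + s • (y - ybar) = (1 - s) • ybar + s • y := by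
        rw [smul_sub, sub_smul, one_smul]; abel
      have hXid : p + s • (x - p) = (1 - s) • p + s • x := by
        rw [smul_sub, sub_smul, one_smul]; abel
      have hwM : p + s • (x - p) ∈ M (ybar + s • (y - ybar)) := by
        rw [hYid, hXid]
        simpa [Prod.smul_mk, Prod.mk_add_mk] using hseg
      have happ := H (ybar + s • (y - ybar)) hkV (p + s • (x - p)) ⟨hwM, hkU⟩
      -- distance computations
      have hdist : dist (ybar + s • (y - ybar)) ybar = s * τ := by
        rw [dist_eq_norm, add_sub_cancel_left, norm_smul, Real.norm_eq_abs,
          abs_of_pos hs0, hτdef, dist_eq_norm]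
      have hlow : s * d ≤ infDist (p + s • (x - p)) C := by
        apply le_infDist_aux hdom
        intro q hq
        have h1 : d ≤ dist x q := infDist_le_dist_of_mem hq
        have h2 : dist x (p + s • (x - p)) = (1 - s) * dist x p := by
          rw [dist_eq_norm, dist_eq_norm]
          have : x - (p + s • (x - p)) = (1 - s) • (x - p) := by
            rw [sub_smul, one_smul]; abel
          rw [this, norm_smul, Real.norm_eq_abs, abs_of_nonneg (by linarith)]
        have h3 : dist x q ≤ dist x (p + s • (x - p)) + dist (p + s • (x - p)) q :=
          dist_triangle _ _ _
        have h4 : (1 - s) * dist x p ≤ (1 - s) * d :=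
          mul_le_mul_of_nonneg_left hpd (by linarith)
        nlinarith
      have : s * d ≤ s * (κ'' * τ) := by
        calc s * d ≤ infDist (p + s • (x - p)) C := hlow
          _ ≤ κ'' * dist (ybar + s • (y - ybar)) ybar := happ
          _ = s * (κ'' * τ) := by rw [hdist]; ring
      exact le_of_mul_le_mul_left this hs0
    have hlt : r < clmod M ybar p := by
      refine lt_of_lt_of_le ?_ hclm
      rw [← hofr]
      exact (ENNReal.ofReal_lt_ofReal_iff_of_nonneg hκ0).2 ((lt_div_iff₀ hτpos).2 hκτ)
    have : r < ⨆ x ∈ M ybar, clmod M ybar x :=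
      lt_of_lt_of_le hlt (le_iSup₂ (f := fun x _ => clmod M ybar x) p hpC)
    exact absurd hRr (not_lt.2 this.le)
  · -- easy direction
    apply iSup₂_le
    intro xb _
    apply sInf_le_sInf
    apply Set.image_mono
    rintro κ ⟨hκ0, V, hV, H⟩
    exact ⟨hκ0, V, hV, Set.univ, Filter.univ_mem, fun y hy x hx => H y hy x hx.1⟩
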